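/- arXiv:1210.8254 — 4 statements merged into one kernel-verified Lean document; each statement's English description precedes it below -/
import Mathlib

section
/- For any positive integer m and any nonzero complex numbers a, b with a + b = -e^{it} for some real t, there exists a nonzero complex number z satisfying (conj(z) - conj(a)) * (z - b) = z^(m+1) / conj(z)^m. -/
set_option maxHeartbeats 1000000

open Complex Real

/-- Pass lemma: for `n ≥ 3`, `|λ| = 1`, `|D| < 1`, any `E`, there is `θ` where the
"imaginary part" `Im (D e^{iθ} + λ e^{inθ})` vanishes while the "real part"
`Re (E e^{iθ} + λ e^{inθ})` is nonnegative with square at least `1 - |D|²`. -/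
lemma passLemma (n : ℕ) (hn : 3 ≤ n) (D E lam : ℂ) (hlam : ‖lam‖ = 1)
    (hD : ‖D‖ < 1) :
    ∃ θ : ℝ, (D * Complex.exp (θ * I) + lam * Complex.exp ((n : ℂ) * θ * I)).im = 0 ∧
      0 ≤ (E * Complex.exp (θ * I) + lam * Complex.exp ((n : ℂ) * θ * I)).re ∧
      1 - (‖D‖) ^ 2 ≤ ((E * Complex.exp (θ * I) + lam * Complex.exp ((n : ℂ) * θ * I)).re) ^ 2 := by
  have hπ : (0:ℝ) < π := Real.pi_pos
  have hn0 : (0:ℝ) < n := by positivity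
  set l : ℝ := Complex.arg lam with hl
  set β : ℝ := Complex.arg E with hβ
  have hlam_eq : lam = Complex.exp (l * I) := by
    have := Complex.norm_mul_exp_arg_mul_I lam
    rw [hlam] at this; simpa using this.symm
  -- left end of window
  set L : ℝ := n * (-β - π/2) + l with hLdef
  set k : ℤ := ⌈(L + π/2) / (2*π)⌉ with hk
  set Φa : ℝ := -(π/2) + k * (2*π) with hΦa
  have hk1 : L + π/2 ≤ (k:ℝ) * (2*π) := by
    have := Int.le_ceil ((L + π/2) / (2*π))
    rwa [div_le_iff₀ (by positivity : (0:ℝ) < 2*π)] at this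
  have hk2 : (k:ℝ) * (2*π) < L + π/2 + 2*π := by
    have := Int.ceil_lt_add_one ((L + π/2) / (2*π))
    have h2 := mul_lt_mul_of_pos_right this (by positivity : (0:ℝ) < 2*π)
    rw [add_mul, div_mul_cancel₀ _ (by positivity : (2*π:ℝ) ≠ 0), one_mul] at h2
    linarith
  have hΦa1 : L ≤ Φa := by rw [hΦa, hLdef] at *; linarith
  have hΦa2 : Φa < L + 2*π := by rw [hΦa, hLdef] at *; linarith
  set θ₁ : ℝ := (Φa - l) / n with hθ₁
  set θ₂ : ℝ := θ₁ + π / n with hθ₂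
  have hθ₁n : n * θ₁ + l = Φa := by rw [hθ₁]; field_simp; ring
  have hθ₂n : n * θ₂ + l = Φa + π := by rw [hθ₂, hθ₁]; field_simp; ring
  have hwin1 : -β - π/2 ≤ θ₁ := by
    rw [hθ₁, le_div_iff₀ hn0]
    rw [hLdef] at hΦa1; nlinarith
  have hwin2 : θ₂ ≤ -β + π/2 := by
    have h3 : 3 * π ≤ π * n := by
      have : (3:ℝ) ≤ n := by exact_mod_cast hn
      nlinarith
    rw [hθ₂, hθ₁]
    rw [hLdef] at hΦa2
    rw [← add_div, div_le_iff₀ hn0]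
    nlinarith
  have hθ₁₂ : θ₁ ≤ θ₂ := by
    rw [hθ₂]; have : 0 ≤ π / (n:ℝ) := by positivity
    linarith
  -- the function ψ
  have hcont : Continuous (fun θ : ℝ => (D * Complex.exp (θ * I) + lam * Complex.exp ((n : ℂ) * θ * I)).im) := by
    apply Complex.continuous_im.comp
    apply Continuous.add
    · exact continuous_const.mul (Complex.continuous_exp.comp
        ((Complex.continuous_ofReal).mul continuous_const))
    · exact continuous_const.mul (Complex.continuous_exp.comp
        (((continuous_const).mul (Complex.continuous_ofReal)).mul continuous_const))
  -- rewrite the fast term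
  have hfast : ∀ θ : ℝ, lam * Complex.exp ((n : ℂ) * θ * I)
      = Complex.exp ((↑((n:ℝ) * θ + l)) * I) := by
    intro θ
    rw [hlam_eq, ← Complex.exp_add]
    congr 1
    push_cast
    ring
  have him : ∀ θ : ℝ, (D * Complex.exp (θ * I) + lam * Complex.exp ((n : ℂ) * θ * I)).im
      = (D * Complex.exp (θ * I)).im + Real.sin ((n:ℝ) * θ + l) := by
    intro θ
    simp only [hfast θ, Complex.add_im, Complex.exp_ofReal_mul_I_im]
  have habsim : ∀ θ : ℝ, |(D * Complex.exp (θ * I)).im| ≤ ‖D‖ := by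
    intro θ
    calc |(D * Complex.exp (θ * I)).im| ≤ ‖D * Complex.exp (θ * I)‖ :=
          Complex.abs_im_le_norm _
    _ = ‖D‖ := by
          rw [norm_mul, Complex.norm_exp_ofReal_mul_I, mul_one]
  have hψ₁ : (D * Complex.exp (θ₁ * I) + lam * Complex.exp ((n : ℂ) * θ₁ * I)).im ≤ ‖D‖ - 1 := by
    rw [him θ₁, hθ₁n, hΦa]
    rw [show -(π/2) + (k:ℝ) * (2*π) = -(π/2) + k * (2*π) by ring, Real.sin_add_int_mul_two_pi]
    rw [Real.sin_neg, Real.sin_pi_div_two]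
    have := habsim θ₁
    have := abs_le.mp this
    linarith [this.2]
  have hψ₂ : 1 - ‖D‖ ≤ (D * Complex.exp (θ₂ * I) + lam * Complex.exp ((n : ℂ) * θ₂ * I)).im := by
    rw [him θ₂, hθ₂n, hΦa]
    rw [show -(π/2) + (k:ℝ) * (2*π) + π = π/2 + k * (2*π) by ring, Real.sin_add_int_mul_two_pi]
    rw [Real.sin_pi_div_two]
    have := abs_le.mp (habsim θ₂)
    linarith [this.1]
  -- IVT
  have hmem : (0:ℝ) ∈ Set.Icc ((D * Complex.exp (θ₁ * I) + lam * Complex.exp ((n : ℂ) * θ₁ * I)).im)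
      ((D * Complex.exp (θ₂ * I) + lam * Complex.exp ((n : ℂ) * θ₂ * I)).im) :=
    Set.mem_Icc.mpr ⟨by linarith, by linarith⟩
  obtain ⟨θ, hθmem, hθ0⟩ := intermediate_value_Icc hθ₁₂ (hcont.continuousOn) hmem
  simp only at hθ0
  have hθa : θ₁ ≤ θ := hθmem.1
  have hθb : θ ≤ θ₂ := hθmem.2
  have hΦmem : (n:ℝ) * θ + l - k * (2*π) ∈ Set.Icc (-(π/2)) (π/2) := by
    constructor
    · have : Φa ≤ (n:ℝ) * θ + l := by
        rw [← hθ₁n]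
        have := mul_le_mul_of_nonneg_left hθa (le_of_lt hn0)
        linarith
      rw [hΦa] at this; linarith
    · have : (n:ℝ) * θ + l ≤ Φa + π := by
        rw [← hθ₂n]
        have := mul_le_mul_of_nonneg_left hθb (le_of_lt hn0)
        linarith
      rw [hΦa] at this; linarith
  have hcosΦ : 0 ≤ Real.cos ((n:ℝ) * θ + l) := by
    rw [← Real.cos_sub_int_mul_two_pi ((n:ℝ)*θ+l) k]
    exact Real.cos_nonneg_of_mem_Icc hΦmem
  have hsinΦ : Real.sin ((n:ℝ) * θ + l) = -(D * Complex.exp (θ * I)).im := by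
    have h5 := him θ
    rw [hθ0] at h5
    linarith
  have hcossq : 1 - (‖D‖)^2 ≤ (Real.cos ((n:ℝ) * θ + l))^2 := by
    have h1 : (Real.sin ((n:ℝ)*θ+l))^2 + (Real.cos ((n:ℝ)*θ+l))^2 = 1 := Real.sin_sq_add_cos_sq _
    have h2 : (Real.sin ((n:ℝ)*θ+l))^2 ≤ (‖D‖)^2 := by
      rw [hsinΦ, neg_sq]
      have h4 := abs_le.mp (habsim θ)
      exact sq_le_sq' h4.1 h4.2
    linarith
  have hEre : 0 ≤ (E * Complex.exp (θ * I)).re := by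
    have hE_eq : E = (‖E‖ : ℂ) * Complex.exp (β * I) :=
      (Complex.norm_mul_exp_arg_mul_I E).symm
    have hcast : (↑β * I + ↑θ * I : ℂ) = (↑(β + θ)) * I := by push_cast; ring
    have h6 : E * Complex.exp (θ * I) = (‖E‖ : ℂ) * Complex.exp ((↑(β + θ)) * I) := by
      conv_lhs => rw [hE_eq]
      rw [mul_assoc, ← Complex.exp_add, hcast]
    rw [h6]
    have h7 : ((‖E‖ : ℂ) * Complex.exp ((↑(β + θ)) * I)).re
        = ‖E‖ * Real.cos (β + θ) := by
      rw [Complex.re_ofReal_mul, Complex.exp_ofReal_mul_I_re]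
    rw [h7]
    apply mul_nonneg (norm_nonneg E)
    apply Real.cos_nonneg_of_mem_Icc
    have hb1 : θ ≤ -β + π/2 := le_trans hθb hwin2
    have hb2 : -β - π/2 ≤ θ := le_trans hwin1 hθa
    refine Set.mem_Icc.mpr ⟨by linarith, by linarith⟩
  have hRe_eq : (E * Complex.exp (θ * I) + lam * Complex.exp ((n : ℂ) * θ * I)).re
      = (E * Complex.exp (θ * I)).re + Real.cos ((n:ℝ) * θ + l) := by
    rw [hfast θ]
    simp only [Complex.add_re, Complex.exp_ofReal_mul_I_re]
  refine ⟨θ, hθ0, ?_, ?_⟩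
  · rw [hRe_eq]; linarith
  · rw [hRe_eq]
    nlinarith [hEre, hcosΦ, hcossq]

noncomputable def ff (m : ℕ) (a b : ℂ) (θ : ℝ) : ℂ :=
  (starRingEnd ℂ) a * Complex.exp (θ * I) + b * Complex.exp (-(θ:ℂ) * I)
    + Complex.exp ((2*m+1 : ℂ) * θ * I)

lemma ff_cont (m : ℕ) (a b : ℂ) : Continuous (ff m a b) := by
  unfold ff
  apply Continuous.add
  apply Continuous.add
  · exact continuous_const.mul (Complex.continuous_exp.comp
      ((Complex.continuous_ofReal).mul continuous_const))
  · apply continuous_const.mul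
    apply Complex.continuous_exp.comp
    exact (Complex.continuous_ofReal.neg).mul continuous_const
  · apply Complex.continuous_exp.comp
    exact (continuous_const.mul Complex.continuous_ofReal).mul continuous_const

lemma ff_flip (m : ℕ) (a b : ℂ) (θ : ℝ) : ff m a b (θ + π) = - ff m a b θ := by
  unfold ff
  have h1 : Complex.exp ((↑(θ + π)) * I) = - Complex.exp (θ * I) := by
    push_cast
    rw [add_mul, Complex.exp_add, Complex.exp_pi_mul_I]
    ring
  have h2 : Complex.exp (-(↑(θ + π):ℂ) * I) = - Complex.exp (-(θ:ℂ) * I) := by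
    push_cast
    have : (-(↑θ + ↑π) * I : ℂ) = -(θ:ℂ)*I + (-↑π * I) := by ring
    rw [this, Complex.exp_add]
    have : Complex.exp (-↑π * I) = -1 := by
      rw [show (-↑π * I : ℂ) = -(↑π * I) by ring, Complex.exp_neg, Complex.exp_pi_mul_I]
      norm_num
    rw [this]
    ring
  have h3 : Complex.exp ((2*m+1 : ℂ) * (↑(θ + π)) * I) = - Complex.exp ((2*m+1 : ℂ) * θ * I) := by
    have harg : ((2*m+1 : ℂ) * (↑(θ + π)) * I) = (2*m+1 : ℂ) * θ * I + (↑π * I + (m:ℂ) * (2*π*I)) := by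
      push_cast
      ring
    rw [harg, Complex.exp_add, Complex.exp_add, Complex.exp_pi_mul_I, Complex.exp_nat_mul,
      Complex.exp_two_pi_mul_I, one_pow]
    ring
  rw [h1, h2, h3]
  ring

lemma ff_im_zero (m : ℕ) (a b : ℂ) : ∃ θ₀ : ℝ, (ff m a b θ₀).im = 0 := by
  have hcont : Continuous fun θ => (ff m a b θ).im := Complex.continuous_im.comp (ff_cont m a b)
  have hflip : (ff m a b (0 + π)).im = - (ff m a b 0).im := by rw [ff_flip]; simp
  rcases le_total ((ff m a b 0).im) 0 with hle | hle
  · have hmem : (0:ℝ) ∈ Set.Icc ((ff m a b 0).im) ((ff m a b (0+π)).im) := by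
      rw [hflip]; exact Set.mem_Icc.mpr ⟨hle, by linarith⟩
    obtain ⟨θ₀, _, hθ₀⟩ := intermediate_value_Icc (by positivity : (0:ℝ) ≤ 0 + π)
      (hcont.continuousOn) hmem
    exact ⟨θ₀, hθ₀⟩
  · have hmem : (0:ℝ) ∈ Set.Icc ((ff m a b (0+π)).im) ((ff m a b 0).im) := by
      rw [hflip]; exact Set.mem_Icc.mpr ⟨by linarith, hle⟩
    obtain ⟨θ₀, _, hθ₀⟩ := intermediate_value_Icc' (by positivity : (0:ℝ) ≤ 0 + π)
      (hcont.continuousOn) hmem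
    exact ⟨θ₀, hθ₀⟩

lemma reduction (m : ℕ) (a b : ℂ) (θ r : ℝ) (hr : r ≠ 0)
    (h : (r:ℂ)^2 - r * ff m a b θ + (starRingEnd ℂ) a * b = 0) :
    ∃ z : ℂ, z ≠ 0 ∧
      ((starRingEnd ℂ) z - (starRingEnd ℂ) a) * (z - b) = z ^ (m + 1) / ((starRingEnd ℂ) z) ^ m := by
  unfold ff at h
  set ep : ℂ := Complex.exp (θ * I) with hep
  set eminus : ℂ := Complex.exp (-(θ:ℂ) * I) with heminus
  set en : ℂ := Complex.exp ((2*m+1 : ℂ) * θ * I) with hen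
  have hconj : (starRingEnd ℂ) ep = eminus := by
    rw [hep, heminus, ← Complex.exp_conj]
    congr 1
    simp [Complex.conj_ofReal]
  have h1 : eminus * ep = 1 := by
    rw [hep, heminus, ← Complex.exp_add]
    simp
  refine ⟨(r:ℂ) * ep, ?_, ?_⟩
  · apply mul_ne_zero
    · exact_mod_cast hr
    · exact Complex.exp_ne_zero _
  · have hcz : (starRingEnd ℂ) ((r:ℂ) * ep) = (r:ℂ) * eminus := by
      rw [map_mul, hconj, Complex.conj_ofReal]
    have hcz0 : ((r:ℂ) * eminus) ^ m ≠ 0 := by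
      apply pow_ne_zero
      apply mul_ne_zero
      · exact_mod_cast hr
      · exact Complex.exp_ne_zero _
    rw [hcz, eq_div_iff hcz0]
    have key : ((r:ℂ) * eminus - (starRingEnd ℂ) a) * ((r:ℂ) * ep - b) = r * en := by
      linear_combination h + (r:ℂ)^2 * h1
    rw [key]
    have hpow : en * eminus ^ m = ep ^ (m+1) := by
      rw [hen, heminus, hep, ← Complex.exp_nat_mul, ← Complex.exp_nat_mul, ← Complex.exp_add]
      congr 1
      push_cast
      ring
    rw [mul_pow, mul_pow, ← hpow]
    ring

lemma finish_q_zero (m : ℕ) (a b : ℂ) (θ₀ : ℝ)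
    (hq : ((starRingEnd ℂ) a * b).im = 0)
    (hk : ((starRingEnd ℂ) a * b).re ≠ 0)
    (h0 : (ff m a b θ₀).im = 0)
    (hx : 4 * ((starRingEnd ℂ) a * b).re ≤ (ff m a b θ₀).re ^ 2) :
    ∃ z : ℂ, z ≠ 0 ∧
      ((starRingEnd ℂ) z - (starRingEnd ℂ) a) * (z - b) = z ^ (m + 1) / ((starRingEnd ℂ) z) ^ m := by
  set κ : ℝ := ((starRingEnd ℂ) a * b).re with hκ
  set x : ℝ := (ff m a b θ₀).re with hxdef
  set s : ℝ := Real.sqrt (x^2 - 4*κ) with hsdef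
  have hs : s^2 = x^2 - 4*κ := Real.sq_sqrt (by linarith)
  set r : ℝ := (x + s)/2 with hrdef
  have hre : r^2 - r*x + κ = 0 := by
    rw [hrdef]; nlinarith [hs]
  have hr0 : r ≠ 0 := by
    intro h
    rw [h] at hre
    simp at hre
    exact hk (by rw [← hκ] at *; linarith)
  apply reduction m a b θ₀ r hr0
  apply Complex.ext
  · simp only [Complex.add_re, Complex.sub_re, Complex.mul_re, Complex.ofReal_re,
      Complex.ofReal_im, ← hκ, ← hxdef]
    have h1 : ((r:ℂ)^2).re = r^2 := by norm_cast
    have h2 : ((r:ℂ)^2).im = 0 := by norm_cast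
    simp only [Complex.sub_re, Complex.add_re, Complex.mul_re, Complex.ofReal_re,
      Complex.ofReal_im, h1]
    rw [h0]
    simp only [Complex.zero_re]
    linarith [hre]
  · have h2 : ((r:ℂ)^2).im = 0 := by norm_cast
    simp only [Complex.add_im, Complex.sub_im, Complex.mul_im, Complex.ofReal_re,
      Complex.ofReal_im, h2, h0, hq]
    simp

lemma finish_q_ne_zero (m : ℕ) (a b : ℂ) (θ₁ : ℝ)
    (hq : ((starRingEnd ℂ) a * b).im ≠ 0)
    (hh : (((starRingEnd ℂ) a * b).im)^2
        ≤ ((starRingEnd ℂ) a * b).im * (ff m a b θ₁).re * (ff m a b θ₁).im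
          - ((starRingEnd ℂ) a * b).re * ((ff m a b θ₁).im)^2) :
    ∃ z : ℂ, z ≠ 0 ∧
      ((starRingEnd ℂ) z - (starRingEnd ℂ) a) * (z - b) = z ^ (m + 1) / ((starRingEnd ℂ) z) ^ m := by
  set κ : ℝ := ((starRingEnd ℂ) a * b).re with hκ
  set q : ℝ := ((starRingEnd ℂ) a * b).im with hqdef
  set h : ℝ → ℝ := fun θ => q * (ff m a b θ).re * (ff m a b θ).im - κ * ((ff m a b θ).im)^2
    with hhdef
  have hcont : Continuous h := by
    rw [hhdef]
    apply Continuous.sub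
    · exact (continuous_const.mul (Complex.continuous_re.comp (ff_cont m a b))).mul
        (Complex.continuous_im.comp (ff_cont m a b))
    · exact continuous_const.mul ((Complex.continuous_im.comp (ff_cont m a b)).pow 2)
  obtain ⟨θ₂, hθ₂⟩ := ff_im_zero m a b
  have hh2 : h θ₂ = 0 := by rw [hhdef]; simp [hθ₂]
  have hmem : q^2 ∈ Set.uIcc (h θ₂) (h θ₁) := by
    rw [hh2]
    apply Set.mem_uIcc.mpr
    left
    exact ⟨by positivity, hh⟩
  obtain ⟨θ, _, hθ⟩ := intermediate_value_uIcc (hcont.continuousOn) hmem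
  have hy : (ff m a b θ).im ≠ 0 := by
    intro hy0
    rw [hhdef] at hθ
    simp only [hy0] at hθ
    simp at hθ
    exact hq (by rw [← hqdef] at *; nlinarith [hθ])
  set y : ℝ := (ff m a b θ).im with hydef
  set x : ℝ := (ff m a b θ).re with hxdef
  set r : ℝ := q / y with hrdef
  have hry : r * y = q := div_mul_cancel₀ q hy
  have hr0 : r ≠ 0 := div_ne_zero hq hy
  have hθ' : q * x * y - κ * y^2 = q^2 := by
    rw [hhdef] at hθ
    simp only [← hxdef, ← hydef] at hθ
    exact hθ
  have hre : r^2 - r*x + κ = 0 := by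
    have h2 : (r^2 - r*x + κ) * y^2 = (r*y)^2 - (r*y)*(x*y) + κ*y^2 := by ring
    rw [hry] at h2
    have h3 : (r^2 - r*x + κ) * y^2 = 0 := by rw [h2]; nlinarith [hθ']
    exact (mul_eq_zero.mp h3).resolve_right (pow_ne_zero 2 hy)
  apply reduction m a b θ r hr0
  apply Complex.ext
  · have h1 : ((r:ℂ)^2).re = r^2 := by norm_cast
    simp only [Complex.add_re, Complex.sub_re, Complex.mul_re, Complex.ofReal_re,
      Complex.ofReal_im, h1, ← hκ, ← hxdef, ← hydef]
    simp only [Complex.zero_re]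
    linarith [hre]
  · have h2 : ((r:ℂ)^2).im = 0 := by norm_cast
    simp only [Complex.add_im, Complex.sub_im, Complex.mul_im, Complex.ofReal_re,
      Complex.ofReal_im, h2, ← hqdef, ← hydef]
    simp only [Complex.zero_im]
    have : r * y = q := hry
    linarith [hry]

/-- Lemma A.1: for any positive integer `m` and nonzero complex `a, b` with
`a + b = -e^{it}` for some real `t`, there is a nonzero solution `z` of
`(conj z - conj a)(z - b) = z^(m+1) / (conj z)^m`. -/
theorem stmt_0 (m : ℕ) (hm : 0 < m) (a b : ℂ) (ha : a ≠ 0) (hb : b ≠ 0)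
    (t : ℝ) (hab : a + b = -Complex.exp (Complex.I * t)) :
    ∃ z : ℂ, z ≠ 0 ∧
      ((starRingEnd ℂ) z - (starRingEnd ℂ) a) * (z - b)
        = z ^ (m + 1) / ((starRingEnd ℂ) z) ^ m := by
  set p : ℂ := (starRingEnd ℂ) a * b with hpdef
  have hp : p ≠ 0 := mul_ne_zero (by simpa using ha) hb
  set κ : ℝ := p.re with hκdef
  set q : ℝ := p.im with hqdef
  have hpabs : 0 < ‖p‖ := norm_pos_iff.mpr hp
  -- |a+b| = 1 and its normSq consequence
  have hab1 : Complex.normSq (a + b) = 1 := by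
    rw [hab]
    rw [Complex.normSq_neg, ← Complex.sq_norm, Complex.norm_exp]
    simp
  have hnorm : Complex.normSq a + Complex.normSq b + 2*κ = 1 := by
    rw [← hab1, Complex.normSq_add]
    have : (a * (starRingEnd ℂ) b).re = κ := by
      rw [hκdef, hpdef]
      have : a * (starRingEnd ℂ) b = (starRingEnd ℂ) ((starRingEnd ℂ) a * b) := by
        rw [map_mul]; simp [mul_comm]
      rw [this, Complex.conj_re]
    rw [this]
  have hκabs : κ ≤ ‖p‖ := Complex.re_le_norm p
  have hκabs' : -‖p‖ ≤ κ := by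
    have := Complex.abs_re_le_norm p
    rw [← hκdef] at this
    cases' abs_le.mp this with h1 h2
    linarith
  rcases lt_or_ge 0 (κ + ‖p‖) with hpos | hneg
  swap
  · -- degenerate case : p is a negative real
    have hκeq : κ = -‖p‖ := by linarith
    have hq0 : q = 0 := by
      have h1 : Complex.normSq p = κ^2 + q^2 := by
        rw [Complex.normSq_apply, ← hκdef, ← hqdef]; ring
      have h2 : Complex.normSq p = (‖p‖)^2 := (Complex.sq_norm p).symm
      have : q^2 = 0 := by rw [hκeq] at h1; nlinarith
      exact pow_eq_zero_iff (by norm_num) |>.mp this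
    obtain ⟨θ₀, hθ₀⟩ := ff_im_zero m a b
    apply finish_q_zero m a b θ₀ hq0 (by rw [← hκdef]; intro h; rw [h] at hκeq; linarith) hθ₀
    rw [← hκdef]
    nlinarith [sq_nonneg ((ff m a b θ₀).re)]
  · -- main case
    set A : ℂ := p + (‖p‖ : ℂ) with hAdef
    have hAre : A.re = κ + ‖p‖ := by
      rw [hAdef]; simp [Complex.add_re, Complex.ofReal_re, hκdef]
    have hA0 : A ≠ 0 := by
      intro h
      rw [h] at hAre
      simp at hAre
      linarith
    set u : ℂ := A / ((‖A‖ : ℝ) : ℂ) with hudef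
    have hAabs : (0:ℝ) < ‖A‖ := norm_pos_iff.mpr hA0
    have hden : ((‖A‖ : ℝ) : ℂ) ≠ 0 := by
      simp only [ne_eq, Complex.ofReal_eq_zero]
      exact ne_of_gt hAabs
    have hu1 : ‖u‖ = 1 := by
      rw [hudef, norm_div, Complex.norm_real, Real.norm_eq_abs, abs_of_pos hAabs, div_self (ne_of_gt hAabs)]
    have hunorm : u.re^2 + u.im^2 = 1 := by
      have h := Complex.sq_norm u
      rw [hu1] at h
      rw [Complex.normSq_apply] at h
      nlinarith [h]
    -- the key algebraic property of u
    have hKconj : (starRingEnd ℂ) p = 2*(κ:ℝ) - p := by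
      apply Complex.ext
      · simp only [Complex.conj_re, Complex.sub_re, Complex.mul_re, Complex.ofReal_re,
          Complex.ofReal_im, hκdef]
        simp
        ring
      · simp [Complex.conj_im, hqdef]
    have hB : ((‖p‖ : ℝ) : ℂ)^2 = p * (starRingEnd ℂ) p := by
      rw [Complex.mul_conj]
      norm_cast
      exact Complex.sq_norm p
    have hA2 : ((‖A‖ : ℝ) : ℂ)^2 = A * (starRingEnd ℂ) A := by
      rw [Complex.mul_conj]
      norm_cast
      exact Complex.sq_norm A
    have hB2 : ((‖p‖ : ℝ) : ℂ)^2 = p * (2*(κ:ℝ) - p) := by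
      rw [hB, hKconj]
    have husq : ((‖p‖ : ℝ) : ℂ) * u^2 = p := by
      rw [hudef, div_pow, ← mul_div_assoc, div_eq_iff (pow_ne_zero 2 hden)]
      rw [hA2, hAdef]
      have hconjA : (starRingEnd ℂ) (p + ((‖p‖ : ℝ) : ℂ)) =
          (starRingEnd ℂ) p + ((‖p‖ : ℝ) : ℂ) := by
        rw [map_add, Complex.conj_ofReal]
      rw [hconjA, hKconj]
      linear_combination (((‖p‖ : ℝ) : ℂ) + p) * hB2
    -- re/im components of the relation |p| u² = p
    have hκu : κ = ‖p‖ * (u.re^2 - u.im^2) := by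
      have h := congrArg Complex.re husq
      simp only [Complex.mul_re, Complex.ofReal_re, Complex.ofReal_im, zero_mul, sub_zero,
        pow_two, Complex.mul_re, Complex.mul_im] at h
      rw [hκdef]
      rw [← h]
      ring
    have hqu : q = ‖p‖ * (2 * (u.re * u.im)) := by
      have h := congrArg Complex.im husq
      simp only [Complex.mul_im, Complex.ofReal_re, Complex.ofReal_im, zero_mul, add_zero,
        pow_two, Complex.mul_re, Complex.mul_im] at h
      rw [hqdef]
      rw [← h]
      ring
    -- u squared
    have hu2 : u^2 = p / ((‖p‖ : ℝ) : ℂ) := by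
      rw [eq_div_iff (by simp only [ne_eq, Complex.ofReal_eq_zero]; exact ne_of_gt hpabs)]
      rw [mul_comm]
      exact husq
    -- D and E
    set D : ℂ := (starRingEnd ℂ) u * (starRingEnd ℂ) a - u * (starRingEnd ℂ) b with hDdef
    set E : ℂ := (starRingEnd ℂ) u * (starRingEnd ℂ) a + u * (starRingEnd ℂ) b with hEdef
    have hkey : ((starRingEnd ℂ) u * (starRingEnd ℂ) a) * (starRingEnd ℂ) (u * (starRingEnd ℂ) b)
        = ((‖p‖ : ℝ) : ℂ) := by
      have h1 : (starRingEnd ℂ) (u * (starRingEnd ℂ) b) = (starRingEnd ℂ) u * b := by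
        rw [map_mul, Complex.conj_conj]
      rw [h1]
      have h2 : ((starRingEnd ℂ) u * (starRingEnd ℂ) a) * ((starRingEnd ℂ) u * b)
          = (starRingEnd ℂ) (u^2) * p := by
        rw [hpdef, map_pow]; ring
      rw [h2, hu2, map_div₀, Complex.conj_ofReal]
      rw [div_mul_eq_mul_div, div_eq_iff (by simp only [ne_eq, Complex.ofReal_eq_zero]; exact ne_of_gt hpabs)]
      rw [← Complex.normSq_eq_conj_mul_self, ← Complex.sq_norm]
      push_cast
      ring
    have hDnormSq : Complex.normSq D = Complex.normSq a + Complex.normSq b - 2 * ‖p‖ := by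
      rw [hDdef, Complex.normSq_sub]
      have h1 : Complex.normSq ((starRingEnd ℂ) u * (starRingEnd ℂ) a) = Complex.normSq a := by
        rw [Complex.normSq_mul, Complex.normSq_conj, Complex.normSq_conj]
        have : Complex.normSq u = 1 := by
          rw [← Complex.sq_norm, hu1]; norm_num
        rw [this, one_mul]
      have h2 : Complex.normSq (u * (starRingEnd ℂ) b) = Complex.normSq b := by
        rw [Complex.normSq_mul, Complex.normSq_conj]
        have : Complex.normSq u = 1 := by
          rw [← Complex.sq_norm, hu1]; norm_num
        rw [this, one_mul]
      rw [h1, h2, hkey]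
      simp
    have hDlt : ‖D‖ < 1 := by
      have h1 : (‖D‖)^2 = Complex.normSq D := Complex.sq_norm D
      have h2 : (‖D‖)^2 < 1 := by
        rw [h1, hDnormSq]; linarith
      nlinarith [norm_nonneg D]
    -- apply the pass lemma
    have hn3 : 3 ≤ 2*m+1 := by omega
    obtain ⟨θ, hψ0, hR0, hR2⟩ := passLemma (2*m+1) hn3 D E ((starRingEnd ℂ) u)
      (by rw [Complex.norm_conj]; exact hu1) hDlt
    -- translate pass lemma output to ff
    have hcast : ((2*m+1 : ℕ) : ℂ) * θ * I = (2*(m:ℂ)+1) * θ * I := by push_cast; ring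
    rw [hcast] at hψ0 hR0 hR2
    set w : ℂ := Complex.exp ((θ:ℝ) * I) with hwdef
    set v : ℂ := Complex.exp ((2*(m:ℂ)+1) * θ * I) with hvdef
    have hw' : Complex.exp (-(θ:ℂ) * I) = (starRingEnd ℂ) w := by
      rw [hwdef, ← Complex.exp_conj]
      congr 1
      simp [Complex.conj_ofReal]
    have hffv : ff m a b θ = (starRingEnd ℂ) a * w + b * (starRingEnd ℂ) w + v := by
      unfold ff
      rw [hw', hwdef, hvdef]
    have hζ : (starRingEnd ℂ) u * b * (starRingEnd ℂ) w
        = (starRingEnd ℂ) (u * (starRingEnd ℂ) b * w) := by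
      rw [map_mul, map_mul, Complex.conj_conj]
    have hsplit : (starRingEnd ℂ) u * ff m a b θ
        = (D * w + (starRingEnd ℂ) u * v)
          + (u * (starRingEnd ℂ) b * w + (starRingEnd ℂ) (u * (starRingEnd ℂ) b * w)) := by
      rw [hffv, ← hζ, hDdef]
      ring
    have hsplit2 : (starRingEnd ℂ) u * ff m a b θ - (E * w + (starRingEnd ℂ) u * v)
        = (starRingEnd ℂ) (u * (starRingEnd ℂ) b * w) - (u * (starRingEnd ℂ) b * w) := by
      rw [hffv, ← hζ, hEdef]
      ring
    set R : ℝ := (E * w + (starRingEnd ℂ) u * v).re with hRdef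
    have hgim : ((starRingEnd ℂ) u * ff m a b θ).im = 0 := by
      rw [hsplit]
      rw [Complex.add_im]
      have h1 : (u * (starRingEnd ℂ) b * w + (starRingEnd ℂ) (u * (starRingEnd ℂ) b * w)).im = 0 := by
        rw [Complex.add_im, Complex.conj_im]; ring
      rw [h1, add_zero]
      exact hψ0
    have hgre : ((starRingEnd ℂ) u * ff m a b θ).re = R := by
      have h2 := congrArg Complex.re hsplit2
      rw [Complex.sub_re, Complex.sub_re, Complex.conj_re, sub_self] at h2
      rw [hRdef]
      linarith [h2]
    have huu : u * (starRingEnd ℂ) u = 1 := by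
      rw [Complex.mul_conj]
      have : Complex.normSq u = 1 := by rw [← Complex.sq_norm, hu1]; norm_num
      rw [this]; norm_num
    have hfθ : ff m a b θ = u * ((R:ℝ):ℂ) := by
      have hg : (starRingEnd ℂ) u * ff m a b θ = ((R:ℝ):ℂ) := by
        apply Complex.ext
        · rw [hgre]; simp
        · rw [hgim]; simp
      calc ff m a b θ = (u * (starRingEnd ℂ) u) * ff m a b θ := by rw [huu, one_mul]
      _ = u * ((starRingEnd ℂ) u * ff m a b θ) := by ring
      _ = u * ((R:ℝ):ℂ) := by rw [hg]
    have hx : (ff m a b θ).re = R * u.re := by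
      rw [hfθ]; simp [Complex.mul_re]; ring
    have hy : (ff m a b θ).im = R * u.im := by
      rw [hfθ]; simp [Complex.mul_im]; ring
    have hR2' : 2*κ + 2*‖p‖ ≤ R^2 := by
      have h1 : (‖D‖)^2 = 1 - 2*κ - 2*‖p‖ := by
        rw [Complex.sq_norm, hDnormSq]; linarith
      rw [h1] at hR2
      linarith
    by_cases hq : q = 0
    · -- p is a positive real; u is real
      have hk : κ ≠ 0 := by
        intro hk0
        apply hp
        apply Complex.ext
        · rw [← hκdef, hk0]; simp
        · rw [← hqdef, hq]; simp
      have hcs : u.re * u.im = 0 := by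
        have : ‖p‖ * (2 * (u.re * u.im)) = 0 := by rw [← hqu]; exact hq
        rcases mul_eq_zero.mp this with h | h
        · exact absurd h (ne_of_gt hpabs)
        · linarith
      rcases mul_eq_zero.mp hcs with h | h
      · -- u.re = 0 : impossible
        exfalso
        have : κ = -‖p‖ := by
          rw [hκu, h]
          have : u.im^2 = 1 := by rw [h] at hunorm; nlinarith [hunorm]
          rw [this]; ring
        linarith
      · -- u.im = 0 : conclude with finish_q_zero
        apply finish_q_zero m a b θ hq (by rw [← hκdef]; exact hk)
        · rw [hy, h, mul_zero]
        · rw [← hκdef, hx]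
          have hc2 : u.re^2 = 1 := by rw [h] at hunorm; nlinarith [hunorm]
          have : (R * u.re)^2 = R^2 := by rw [mul_pow, hc2, mul_one]
          rw [this]
          linarith
    · -- q ≠ 0 : conclude with finish_q_ne_zero
      apply finish_q_ne_zero m a b θ (by rw [← hqdef]; exact hq)
      rw [← hqdef, ← hκdef, hx, hy]
      have e1 : q*(R*u.re)*(R*u.im) - κ*(R*u.im)^2 = ‖p‖ * R^2 * u.im^2 := by
        rw [hqu, hκu]
        linear_combination (‖p‖ * R^2 * u.im^2) * hunorm
      have e2 : q^2 = 4*(‖p‖)^2*u.re^2*u.im^2 := by rw [hqu]; ring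
      have e3 : 4*‖p‖*u.re^2 = 2*κ + 2*‖p‖ := by
        rw [hκu]
        linear_combination (2*‖p‖)*hunorm
      have e4 : 4*‖p‖*u.re^2 ≤ R^2 := by linarith
      have e5 := mul_le_mul_of_nonneg_left e4 (mul_nonneg hpabs.le (sq_nonneg u.im))
      nlinarith [e1, e2, e5]
end

section
/- For m = 1 and a = b a real number with -a > 1 (i.e. a < -1), the equation |z - a|^2 = z^3 / |z|^2 has no complex solution z ≠ 0. -/
/-- Lemma A.2: for `a < -1` real, the equation `|z - a|² = z³/|z|²`
has no nonzero complex solution. -/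
theorem stmt_1 (a : ℝ) (ha : a < -1) :
    ¬ ∃ z : ℂ, z ≠ 0 ∧
      ((‖z - (a : ℂ)‖ : ℂ)) ^ 2 = z ^ 3 / ((‖z‖ : ℂ)) ^ 2 := by
  rintro ⟨z, hz, h⟩
  set x := z.re with hxdef
  set y := z.im with hydef
  have habs : ‖z‖ ≠ 0 := by simpa using hz
  have hb : ((‖z‖ : ℂ)) ^ 2 ≠ 0 :=
    pow_ne_zero 2 (by exact_mod_cast habs)
  rw [eq_div_iff hb] at h
  -- h : (↑|z-a|)^2 * (↑|z|)^2 = z^3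
  have hcast : (((‖z - (a:ℂ)‖)^2 * (‖z‖)^2 : ℝ) : ℂ) = z ^ 3 := by
    push_cast; exact h
  have hre : (‖z - (a:ℂ)‖)^2 * (‖z‖)^2 = (z^3).re := by
    rw [← hcast, Complex.ofReal_re]
  have him : (z^3).im = 0 := by rw [← hcast, Complex.ofReal_im]
  have h3re : (z^3).re = x^3 - 3*x*y^2 := by
    simp [pow_succ, Complex.mul_re, Complex.mul_im]; ring
  have h3im : (z^3).im = 3*x^2*y - y^3 := by
    simp [pow_succ, Complex.mul_re, Complex.mul_im]; ring
  have ha1 : ‖z - (a:ℂ)‖ ^ 2 = (x-a)^2 + y^2 := by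
    rw [Complex.sq_norm, Complex.normSq_apply]
    simp only [Complex.sub_re, Complex.sub_im, Complex.ofReal_re, Complex.ofReal_im]
    ring
  have ha2 : ‖z‖ ^ 2 = x^2 + y^2 := by
    rw [Complex.sq_norm, Complex.normSq_apply]; ring
  rw [ha1, ha2, h3re] at hre
  rw [h3im] at him
  -- hre : ((x-a)^2 + y^2)*(x^2+y^2) = x^3 - 3*x*y^2
  -- him : 3*x^2*y - y^3 = 0
  by_cases hy0 : y = 0
  · -- real case
    have hx0 : x ≠ 0 := by
      intro hx0
      apply hz
      apply Complex.ext <;> simp [← hxdef, ← hydef, hx0, hy0]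
    have hre' : (x-a)^2 * x^2 = x^3 := by
      rw [hy0] at hre; linarith [hre]
    have hxpos : 0 < x := by
      rcases lt_trichotomy x 0 with h1 | h1 | h1
      · nlinarith [sq_nonneg (x - a), sq_nonneg x, mul_pos (mul_pos (neg_pos.mpr h1) (neg_pos.mpr h1)) (neg_pos.mpr h1)]
      · exact absurd h1 hx0
      · exact h1
    have hx2 : (0:ℝ) < x^2 := by positivity
    have heq : (x-a)^2 = x := by
      have := mul_right_cancel₀ (ne_of_gt hx2) (by linarith [hre'] : (x-a)^2 * x^2 = x * x^2)
      linarith [this]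
    nlinarith [sq_nonneg (2*x - 2*a - 1)]
  · -- y ≠ 0 : cube roots case
    have hy2 : y^2 = 3*x^2 := by
      have : y * (3*x^2 - y^2) = 0 := by linarith [him]
      rcases mul_eq_zero.mp this with h1 | h1
      · exact absurd h1 hy0
      · linarith
    have hx0 : x ≠ 0 := by
      intro hx0
      apply hy0
      have : y^2 = 0 := by rw [hy2, hx0]; ring
      exact pow_eq_zero_iff (n := 2) (by norm_num) |>.mp this
    have hx2 : (0:ℝ) < x^2 := by positivity
    have hQ : 0 < 4*x^2 - 2*a*x + a^2 + 2*x := by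
      nlinarith [sq_nonneg (8*x + 2 - 2*a),
        mul_pos (show (0:ℝ) < 1 - 3*a by linarith) (show (0:ℝ) < -(a+1) by linarith)]
    have hre2 : ((x-a)^2 + 3*x^2)*(x^2 + 3*x^2) = x^3 - 3*x*(3*x^2) := by
      rw [← hy2]; exact hre
    nlinarith [mul_pos hx2 hQ, hre2]
end

section
/- Let λ be a complex number with |λ| = 1 and λ ≠ ±1, and let m ≥ 1 be an integer. Then there is no nonzero complex number z such that z^{2m}·(z - λ)/(z - conj(λ)) equals the complex conjugate of (1 + conj(λ)·z)/((1 + λ·z)·z^{2m}). -/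
/-- Regularity of the generalized Meeks Möbius strip: for `|λ| = 1`, `λ ≠ ±1`,
`m ≥ 1`, there is no nonzero `z` (avoiding the poles `z = conj λ`, `z = -1/λ`)
with `z^{2m}(z-λ)/(z-conj λ) = conj((1 + conj λ · z)/((1 + λz) z^{2m}))`. -/
theorem stmt_3 (l : ℂ) (hl : ‖l‖ = 1) (hl1 : l ≠ 1) (hl2 : l ≠ -1)
    (m : ℕ) (hm : 1 ≤ m) :
    ¬ ∃ z : ℂ, z ≠ 0 ∧ z ≠ (starRingEnd ℂ) l ∧ 1 + l * z ≠ 0 ∧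
      z ^ (2 * m) * (z - l) / (z - (starRingEnd ℂ) l)
        = (starRingEnd ℂ) ((1 + (starRingEnd ℂ) l * z) / ((1 + l * z) * z ^ (2 * m))) := by
  rintro ⟨z, hz0, hz1, hz2, heq⟩
  have hzc : (starRingEnd ℂ) z ≠ 0 := by simpa using hz0
  have hz1' : z - (starRingEnd ℂ) l ≠ 0 := sub_ne_zero.2 hz1
  have hd : (starRingEnd ℂ) (1 + l * z) ≠ 0 := by
    rw [map_ne_zero]; exact hz2
  have hnl : Complex.normSq l = 1 := by
    rw [← Complex.sq_norm, hl]; norm_num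
  have hll : l * (starRingEnd ℂ) l = 1 := by
    rw [Complex.mul_conj, hnl]; norm_num
  rw [map_div₀, map_mul, map_pow] at heq
  have hd' : 1 + (starRingEnd ℂ) l * (starRingEnd ℂ) z ≠ 0 := by
    simpa [map_add, map_mul] using hd
  simp only [map_add, map_mul, map_one, Complex.conj_conj] at heq
  rw [div_eq_div_iff hz1' (mul_ne_zero hd' (pow_ne_zero _ hzc))] at heq
  set R := Complex.normSq z with hRdef
  have hR : z * (starRingEnd ℂ) z = (R : ℂ) := Complex.mul_conj z
  have h2 : z ^ (2*m) * ((starRingEnd ℂ) z) ^ (2*m) = ((R:ℂ)) ^ (2*m) := by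
    rw [← mul_pow, hR]
  have key : ((R:ℂ)) ^ (2*m) * (z - (starRingEnd ℂ) z + (starRingEnd ℂ) l * R - l)
      = z - (starRingEnd ℂ) z + l * R - (starRingEnd ℂ) l := by
    linear_combination heq - (z - l)*(1 + (starRingEnd ℂ) l * (starRingEnd ℂ) z)*h2
      - ((R:ℂ))^(2*m) * (starRingEnd ℂ) l * hR + ((R:ℂ))^(2*m)*(starRingEnd ℂ) z*hll
      + l*hR - (starRingEnd ℂ) z*hll
  rw [← Complex.ofReal_pow] at key
  have hre := congrArg Complex.re key
  have him := congrArg Complex.im key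
  simp [← Complex.ofReal_pow, Complex.mul_re, Complex.mul_im, Complex.conj_re, Complex.conj_im] at hre him
  have hRpos : 0 < R := Complex.normSq_pos.2 hz0
  have hb2 : z.im ^ 2 ≤ R := by
    rw [hRdef, Complex.normSq_apply]; nlinarith [sq_nonneg z.re]
  have hab : l.re * l.re + l.im * l.im = 1 := by
    rw [← Complex.normSq_apply]; exact hnl
  by_cases hR1 : R = 1
  · rw [hR1] at him
    simp at him
    have hβ : l.im = 0 := by linarith
    have : l.re = 1 ∨ l.re = -1 := by
      have h5 : (l.re - 1) * (l.re + 1) = 0 := by nlinarith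
      rcases mul_eq_zero.1 h5 with h | h
      · left; linarith
      · right; linarith
    rcases this with h | h
    · exact hl1 (Complex.ext h (by simpa using hβ))
    · exact hl2 (Complex.ext (by simpa using h) (by simpa using hβ))
  · have hs1 : R ^ (2 * m) ≠ 1 := by
      rcases lt_or_gt_of_ne hR1 with h | h
      · exact ne_of_lt (pow_lt_one₀ hRpos.le h (by omega))
      · exact ne_of_gt (one_lt_pow₀ h (by omega))
    have hs0 : 0 < R ^ (2 * m) := pow_pos hRpos _
    have h3 : (R ^ (2 * m) - 1) * (l.re * (R - 1)) = 0 := by linear_combination hre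
    have hα : l.re = 0 := by
      rcases mul_eq_zero.1 h3 with h | h
      · exact absurd (by linarith : R ^ (2 * m) = 1) hs1
      · rcases mul_eq_zero.1 h with h' | h'
        · exact h'
        · exact absurd (by linarith : R = 1) hR1
    have hβ2 : l.im ^ 2 = 1 := by nlinarith
    have hE : 2 * z.im * (R ^ (2 * m) - 1) = l.im * (R + 1) * (R ^ (2 * m) + 1) := by
      linear_combination him
    have f1 : (2 * z.im * (R ^ (2 * m) - 1)) ^ 2
        = (l.im * (R + 1) * (R ^ (2 * m) + 1)) ^ 2 := by rw [hE]
    have f1' : 4 * z.im ^ 2 * (R ^ (2 * m) - 1) ^ 2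
        = (R + 1) ^ 2 * (R ^ (2 * m) + 1) ^ 2 := by
      linear_combination f1 + ((R + 1) ^ 2 * (R ^ (2 * m) + 1) ^ 2) * hβ2
    nlinarith [f1', mul_le_mul_of_nonneg_right hb2 (sq_nonneg (R ^ (2 * m) - 1)),
      mul_pos hRpos hs0, sq_nonneg ((R - 1) * (R ^ (2 * m) + 1))]
end

section
/- There is no z ∈ ℂ \ {0} such that z^{2p-1}·e^{(1/2)(z - 1/z)} equals the complex conjugate of (-1/z^{2p-1})·e^{(1/2)(z - 1/z)}, for any positive integer p. -/
/-- Regularity of Example 5.2: for any positive integer `p`, there is no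
`z ∈ ℂ \ {0}` with `z^{2p-1}·e^{(z-1/z)/2} = conj((-1/z^{2p-1})·e^{(z-1/z)/2})`. -/
theorem stmt_5 (p : ℕ) (hp : 0 < p) :
    ¬ ∃ z : ℂ, z ≠ 0 ∧
      z ^ (2 * p - 1) * Complex.exp ((z - 1 / z) / 2)
        = (starRingEnd ℂ) ((-1 / z ^ (2 * p - 1)) * Complex.exp ((z - 1 / z) / 2)) := by
  rintro ⟨z, hz, heq⟩
  set n := 2 * p - 1 with hn
  have hn0 : n ≠ 0 := by omega
  have hzn : z ^ n ≠ 0 := pow_ne_zero _ hz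
  have ha : 0 < ‖z‖ := norm_pos_iff.mpr hz
  have habs : ‖z‖ = 1 := by
    have hE := congrArg (‖·‖) heq
    simp [map_mul, Complex.norm_exp, map_div₀, map_pow, Complex.norm_conj,
      Real.exp_ne_zero] at hE
    have hap : 0 < ‖z‖ ^ n := pow_pos ha n
    have h2 : ‖z‖ ^ (2 * n) = 1 := by
      rw [two_mul, pow_add]
      nth_rewrite 1 [hE]
      exact inv_mul_cancel₀ hap.ne'
    rcases lt_trichotomy ‖z‖ 1 with h | h | h
    · have h3 := pow_lt_one₀ ha.le h (by omega : 2 * n ≠ 0)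
      linarith
    · exact h
    · have h3 := one_lt_pow₀ h (by omega : 2 * n ≠ 0)
      linarith
  have hmul : z * (starRingEnd ℂ) z = 1 := by
    rw [Complex.mul_conj]
    norm_cast
    rw [Complex.normSq_eq_norm_sq, habs]; norm_num
  have hconj : (starRingEnd ℂ) z = z⁻¹ := eq_inv_of_mul_eq_one_right hmul
  have hmain : Complex.exp (z - 1 / z) = -1 := by
    have h1 : (starRingEnd ℂ) ((z - 1 / z) / 2) = -((z - 1 / z) / 2) := by
      simp only [map_div₀, map_sub, map_one, map_inv₀, hconj, Complex.conj_ofNat,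
        one_div, inv_inv]
      ring
    rw [map_mul, ← Complex.exp_conj, h1, map_div₀, map_neg, map_one, map_pow, hconj] at heq
    have h2 : (-1 : ℂ) / z⁻¹ ^ n = -z ^ n := by
      rw [inv_pow, div_inv_eq_mul, neg_one_mul]
    rw [h2] at heq
    have h3 : Complex.exp ((z - 1 / z) / 2) = -Complex.exp (-((z - 1 / z) / 2)) := by
      have := mul_left_cancel₀ hzn (by rw [heq]; ring :
        z ^ n * Complex.exp ((z - 1 / z) / 2) = z ^ n * (-Complex.exp (-((z - 1 / z) / 2))))
      exact this
    have : z - 1 / z = (z - 1 / z) / 2 + (z - 1 / z) / 2 := by ring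
    rw [this, Complex.exp_add]
    nth_rewrite 1 [h3]
    rw [neg_mul, ← Complex.exp_add]
    simp
  -- z - 1/z = 2*im z * I
  have him : z - 1 / z = (2 * z.im : ℝ) * Complex.I := by
    rw [one_div, ← hconj]
    rw [Complex.sub_conj]
  rw [him] at hmain
  have hcos : Real.cos (2 * z.im) = -1 := by
    have := congrArg Complex.re hmain
    rwa [Complex.exp_ofReal_mul_I_re] at this
  have himle : |z.im| ≤ 1 := habs ▸ Complex.abs_im_le_norm z
  have hpi : Real.pi > 3 := Real.pi_gt_three
  have hcpos : 0 < Real.cos z.im := by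
    apply Real.cos_pos_of_mem_Ioo
    constructor
    · have := abs_le.mp himle; linarith
    · have := abs_le.mp himle; linarith
  rw [Real.cos_two_mul] at hcos
  nlinarith
end
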